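/- Under the same hypotheses, the bracket {u,v}' = (-1)^{deg(u)(|v|+deg(v))}[u,v] also defines a Z/2×Z-graded Lie algebra structure with respect to the form ⟨(m̄,n),(m̄',n')⟩ = (m̄+n)(m̄'+n'). -/

import Mathlib

/-- `(-1)^a` for `a : ZMod 2`. -/
def pSign (k : Type*) [CommRing k] (a : ZMod 2) : k := (-1 : k) ^ a.val

lemma pSign_add (k : Type*) [CommRing k] (a b : ZMod 2) :
    pSign k (a + b) = pSign k a * pSign k b := by
  unfold pSign
  rw [ZMod.val_add, ← pow_add, ← neg_one_pow_eq_pow_mod_two]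

lemma exp1 : ∀ p q r s : ZMod 2,
    q*(r+s) + (p*r + q*s) = (p+q)*(r+s) + s*(p+q) := by decide

lemma exp2 : ∀ q r s t u : ZMod 2,
    (q+s)*(t+u) + q*(r+s) = q*((r+t)+(s+u)) + s*(t+u) := by decide

lemma exp3 : ∀ p q r s t u : ZMod 2,
    (q+s)*(t+u) + q*(r+s) + (p*r + q*s)
      = (p+q)*(r+s) + (s*((p+t)+(q+u)) + q*(t+u)) := by decide

/-- Lemma 1, second bracket: under the same hypotheses, the bracket
`{u,v}' = (-1)^{deg(u)(|v|+deg(v))}[u,v]` also satisfies graded antisymmetry and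
the graded Jacobi identity with respect to `⟨(m̄,n),(m̄',n')⟩ = (m̄+n)(m̄'+n')`. -/
theorem second_modified_bracket_graded_lie {k L : Type*} [Field k]
    [AddCommGroup L] [Module k L]
    (𝕃 : ZMod 2 × ℤ → Submodule k L)
    (B : L →ₗ[k] L →ₗ[k] L)
    (hgr : ∀ a b : ZMod 2 × ℤ, ∀ x ∈ 𝕃 a, ∀ y ∈ 𝕃 b, B x y ∈ 𝕃 (a + b))
    (hanti : ∀ a b : ZMod 2 × ℤ, ∀ x ∈ 𝕃 a, ∀ y ∈ 𝕃 b,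
      B x y = - pSign k (a.1 * b.1 + ((a.2 * b.2 : ℤ) : ZMod 2)) • B y x)
    (hjac : ∀ a b c : ZMod 2 × ℤ, ∀ x ∈ 𝕃 a, ∀ y ∈ 𝕃 b, ∀ z ∈ 𝕃 c,
      B (B x y) z = B x (B y z)
        - pSign k (a.1 * b.1 + ((a.2 * b.2 : ℤ) : ZMod 2)) • B y (B x z)) :
    (∀ a b : ZMod 2 × ℤ, ∀ x ∈ 𝕃 a, ∀ y ∈ 𝕃 b,
      pSign k ((a.2 : ZMod 2) * (b.1 + (b.2 : ZMod 2))) • B x y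
        = - pSign k ((a.1 + (a.2 : ZMod 2)) * (b.1 + (b.2 : ZMod 2))) •
            (pSign k ((b.2 : ZMod 2) * (a.1 + (a.2 : ZMod 2))) • B y x)) ∧
    (∀ a b c : ZMod 2 × ℤ, ∀ x ∈ 𝕃 a, ∀ y ∈ 𝕃 b, ∀ z ∈ 𝕃 c,
      pSign k (((a + b).2 : ZMod 2) * (c.1 + (c.2 : ZMod 2))) •
          B (pSign k ((a.2 : ZMod 2) * (b.1 + (b.2 : ZMod 2))) • B x y) z
        = pSign k ((a.2 : ZMod 2) * ((b + c).1 + ((b + c).2 : ZMod 2))) •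
            B x (pSign k ((b.2 : ZMod 2) * (c.1 + (c.2 : ZMod 2))) • B y z)
          - pSign k ((a.1 + (a.2 : ZMod 2)) * (b.1 + (b.2 : ZMod 2))) •
            (pSign k ((b.2 : ZMod 2) * ((a + c).1 + ((a + c).2 : ZMod 2))) •
              B y (pSign k ((a.2 : ZMod 2) * (c.1 + (c.2 : ZMod 2))) • B x z))) := by
  have hcast : ∀ a b : ZMod 2 × ℤ,
      ((a.2 * b.2 : ℤ) : ZMod 2) = (a.2 : ZMod 2) * (b.2 : ZMod 2) := by
    intro a b; push_cast; ring
  constructor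
  · intro a b x hx y hy
    rw [hanti a b x hx y hy]
    simp only [neg_smul, smul_neg, smul_smul, neg_mul, mul_neg, ← pSign_add, hcast a b]
    rw [exp1 a.1 (a.2 : ZMod 2) b.1 (b.2 : ZMod 2)]
  · intro a b c x hx y hy z hz
    simp only [map_smul, LinearMap.smul_apply]
    rw [hjac a b c x hx y hy z hz]
    simp only [smul_sub, smul_smul, ← pSign_add]
    have h1 : (((a + b).2 : ZMod 2) * (c.1 + (c.2 : ZMod 2))
          + (a.2 : ZMod 2) * (b.1 + (b.2 : ZMod 2)))
        = ((a.2 : ZMod 2) * ((b + c).1 + ((b + c).2 : ZMod 2))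
          + (b.2 : ZMod 2) * (c.1 + (c.2 : ZMod 2))) := by
      simp only [Prod.fst_add, Prod.snd_add]
      push_cast
      exact exp2 (a.2 : ZMod 2) b.1 (b.2 : ZMod 2) c.1 (c.2 : ZMod 2)
    have h2 : (((a + b).2 : ZMod 2) * (c.1 + (c.2 : ZMod 2))
          + ((a.2 : ZMod 2) * (b.1 + (b.2 : ZMod 2))
            + (a.1 * b.1 + ((a.2 * b.2 : ℤ) : ZMod 2))))
        = ((a.1 + (a.2 : ZMod 2)) * (b.1 + (b.2 : ZMod 2))
          + ((b.2 : ZMod 2) * ((a + c).1 + ((a + c).2 : ZMod 2))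
            + (a.2 : ZMod 2) * (c.1 + (c.2 : ZMod 2)))) := by
      simp only [Prod.fst_add, Prod.snd_add, hcast a b]
      push_cast
      rw [← add_assoc]
      exact exp3 a.1 (a.2 : ZMod 2) b.1 (b.2 : ZMod 2) c.1 (c.2 : ZMod 2)
    rw [h1, h2]
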